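/- For any a, b ∈ ℚ_p with a ≠ 0, the translation-dilation ψ^{a,b}(x) = |a|_p^{−1/2} ψ((x−b)/a) of the wavelet ψ(x) = χ(p^{−1}x)𝟙_{ℤ_p}(x) equals a complex number of modulus 1 (a root of unity of order dividing p^N for some N) times a wavelet ψ_{γ,n,j} from the discrete wavelet basis, with γ = log_p |a|_p, n = {|a|_p b} (the fractional part of |a|_p·b), and j ≡ (a|a|_p)^{−1} mod p. -/

import Mathlib

open scoped Classical
open MeasureTheory

noncomputable instance (p : ℕ) [Fact p.Prime] : MeasurableSpace ℚ_[p] := borel _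

/-- The unit part of a nonzero `p`-adic number: `x * p^(-v_p(x))`, a `p`-adic unit. -/
noncomputable def padicUnitPart (p : ℕ) [Fact p.Prime] (x : ℚ_[p]) : ℤ_[p] :=
  if hx : x = 0 then 0
  else ⟨x * (p : ℚ_[p]) ^ (-x.valuation), by
    have hp : (1 : ℝ) < p := Nat.one_lt_cast.mpr (Fact.out (p := p.Prime)).one_lt
    rw [norm_mul, Padic.norm_eq_zpow_neg_valuation hx, Padic.norm_p_zpow, neg_neg,
      ← zpow_add₀ (by positivity : (p : ℝ) ≠ 0)]
    simp⟩

/-- The `i`-th digit of the `p`-adic expansion `x = ∑ x_i p^i`. -/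
noncomputable def padicDigit (p : ℕ) [Fact p.Prime] (x : ℚ_[p]) (i : ℤ) : ℕ :=
  if x = 0 then 0
  else if x.valuation ≤ i then
    ((padicUnitPart p x).appr ((i - x.valuation).toNat + 1)
      - (padicUnitPart p x).appr (i - x.valuation).toNat) / p ^ (i - x.valuation).toNat
  else 0

/-- The `p`-adic fractional part `{x}_p = ∑_{i<0} x_i p^i`, a rational number. -/
noncomputable def padicFract (p : ℕ) [Fact p.Prime] (x : ℚ_[p]) : ℚ :=
  ∑ i ∈ Finset.Ico x.valuation 0, (padicDigit p x i : ℚ) * (p : ℚ) ^ i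

/-- `x` is the canonical representative of its coset in `ℚ_p/ℤ_p`. -/
def IsPadicRep (p : ℕ) [Fact p.Prime] (n : ℚ_[p]) : Prop :=
  ((padicFract p n : ℚ) : ℚ_[p]) = n

/-- The standard additive character `χ(x) = exp(2πi {x}_p)` on `ℚ_p`. -/
noncomputable def padicChar (p : ℕ) [Fact p.Prime] (x : ℚ_[p]) : ℂ :=
  Complex.exp (2 * Real.pi * Complex.I * ((padicFract p x : ℚ) : ℂ))

/-- The Monna map `ρ : ℚ_p → [0,∞)`, `∑ x_i p^i ↦ ∑ x_i p^(-i-1)`. -/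
noncomputable def monna (p : ℕ) [Fact p.Prime] (x : ℚ_[p]) : ℝ :=
  ∑' i : ℤ, (padicDigit p x i : ℝ) * (p : ℝ) ^ (-i - 1)

section Helpers

variable (p : ℕ) [Fact p.Prime]

lemma hp_pos : (0:ℝ) < p := by exact_mod_cast (Fact.out (p := p.Prime)).pos

lemma padicUnitPart_coe {x : ℚ_[p]} (hx : x ≠ 0) :
    ((padicUnitPart p x : ℤ_[p]) : ℚ_[p]) = x * (p : ℚ_[p]) ^ (-x.valuation) := by
  simp [padicUnitPart, hx]

lemma norm_padicUnitPart_coe {x : ℚ_[p]} (hx : x ≠ 0) :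
    ‖((padicUnitPart p x : ℤ_[p]) : ℚ_[p])‖ = 1 := by
  have hp : (0 : ℝ) < p := hp_pos p
  rw [padicUnitPart_coe p hx, norm_mul, Padic.norm_eq_zpow_neg_valuation hx, Padic.norm_p_zpow,
    neg_neg, ← zpow_add₀ (by positivity : (p : ℝ) ≠ 0)]
  simp


lemma hq_ne : (p:ℚ) ≠ 0 := Nat.cast_ne_zero.mpr (Fact.out (p := p.Prime)).ne_zero

lemma appr_telescope (u : ℤ_[p]) (m : ℕ) :
    ∑ k ∈ Finset.range m, (((u.appr (k+1) - u.appr k) / p ^ k : ℕ) : ℚ) * (p:ℚ) ^ k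
      = u.appr m := by
  induction m with
  | zero => simp [PadicInt.appr]
  | succ m ih =>
      rw [Finset.sum_range_succ, ih]
      have hd : (p:ℕ) ^ m ∣ u.appr (m+1) - u.appr m :=
        PadicInt.dvd_appr_sub_appr u m (m+1) (by omega)
      have hle : u.appr m ≤ u.appr (m+1) := PadicInt.appr_mono u (by omega)
      have hp0 : ((p:ℚ)) ^ m ≠ 0 := pow_ne_zero _ (hq_ne p)
      have hpm : (((p:ℕ) ^ m : ℕ) : ℚ) ≠ 0 := by push_cast; exact hp0
      have : (((u.appr (m+1) - u.appr m) / p ^ m : ℕ) : ℚ) * (p:ℚ)^m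
          = (u.appr (m+1) : ℚ) - u.appr m := by
        rw [Nat.cast_div hd hpm, Nat.cast_pow, div_mul_cancel₀ _ hp0, Nat.cast_sub hle]
      rw [this]; ring

lemma padicFract_eq (x : ℚ_[p]) (hx : x ≠ 0) :
    padicFract p x
      = (p:ℚ) ^ x.valuation * ((padicUnitPart p x).appr (-x.valuation).toNat : ℚ) := by
  by_cases hv : 0 ≤ x.valuation
  · have h1 : Finset.Ico x.valuation 0 = ∅ := Finset.Ico_eq_empty (by omega)
    have h2 : (-x.valuation).toNat = 0 := by omega
    simp [padicFract, h1, h2, PadicInt.appr]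
  · push_neg at hv
    set v := x.valuation with hvdef
    set m := (-v).toNat with hm
    rw [padicFract, Finset.sum_nbij' (i := fun i => (i - v).toNat) (j := fun k => v + k)
      (t := Finset.range m) (g := fun k =>
        (((padicUnitPart p x).appr (k+1) - (padicUnitPart p x).appr k) / p ^ k : ℕ)
          * (p:ℚ) ^ v * (p:ℚ)^k)]
    · rw [← appr_telescope p (padicUnitPart p x) m, Finset.mul_sum]
      exact Finset.sum_congr rfl fun k _ => by ring
    · intro i hi
      simp only [Finset.mem_Ico] at hi
      simp only [Finset.mem_range]
      omega
    · intro k hk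
      simp only [Finset.mem_range] at hk
      simp only [Finset.mem_Ico]
      omega
    · intro i hi
      simp only [Finset.mem_Ico] at hi
      omega
    · intro k hk; omega
    · intro i hi
      simp only [Finset.mem_Ico] at hi
      rw [padicDigit, if_neg hx, if_pos hi.1]
      have h1 : ((i - x.valuation).toNat : ℤ) = i - v := by omega
      have h2 : (p:ℚ)^i = (p:ℚ)^v * (p:ℚ)^((i - x.valuation).toNat : ℕ) := by
        rw [← zpow_natCast (p:ℚ) _, h1, ← zpow_add₀ (hq_ne p)]
        congr 1; ring
      rw [h2]; ring

lemma padicFract_zero : padicFract p 0 = 0 := by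
  simp [padicFract, padicDigit]

lemma norm_sub_padicFract_le (x : ℚ_[p]) :
    ‖x - ((padicFract p x : ℚ) : ℚ_[p])‖ ≤ 1 := by
  by_cases hx : x = 0
  · simp [hx, padicFract_zero]
  by_cases hv : 0 ≤ x.valuation
  · have h1 : Finset.Ico x.valuation 0 = ∅ := Finset.Ico_eq_empty (by omega)
    simp only [padicFract, h1, Finset.sum_empty, Rat.cast_zero, sub_zero]
    exact (Padic.norm_le_one_iff_val_nonneg x).mpr hv
  · push_neg at hv
    set v := x.valuation with hvdef
    set m := (-v).toNat with hm
    set u := padicUnitPart p x with hu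
    have hxu : x = ((u : ℤ_[p]) : ℚ_[p]) * (p : ℚ_[p]) ^ v := by
      rw [padicUnitPart_coe p hx]
      have hpne : (p : ℚ_[p]) ≠ 0 := Nat.cast_ne_zero.mpr (Fact.out (p := p.Prime)).ne_zero
      rw [mul_assoc, ← zpow_add₀ hpne]
      simp [hvdef]
    have hcast : (((padicFract p x : ℚ)) : ℚ_[p])
        = (p : ℚ_[p]) ^ v * ((u.appr m : ℕ) : ℚ_[p]) := by
      rw [padicFract_eq p x hx]
      push_cast
      rfl
    have hrw : x - (((padicFract p x : ℚ)) : ℚ_[p])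
        = (p : ℚ_[p]) ^ v * (((u : ℤ_[p]) : ℚ_[p]) - ((u.appr m : ℕ) : ℚ_[p])) := by
      rw [hcast, hxu]; ring
    rw [hrw, norm_mul, Padic.norm_p_zpow]
    have hspec : u - (u.appr m : ℤ_[p]) ∈ Ideal.span {(p : ℤ_[p]) ^ m} := PadicInt.appr_spec m u
    have hnorm : ‖u - (u.appr m : ℤ_[p])‖ ≤ (p:ℝ) ^ (-(m:ℤ)) :=
      (PadicInt.norm_le_pow_iff_mem_span_pow _ m).mpr hspec
    have hcoe : ‖((u : ℤ_[p]) : ℚ_[p]) - ((u.appr m : ℕ) : ℚ_[p])‖ ≤ (p:ℝ) ^ (-(m:ℤ)) := by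
      have : ((u : ℤ_[p]) : ℚ_[p]) - ((u.appr m : ℕ) : ℚ_[p])
          = ((u - (u.appr m : ℤ_[p]) : ℤ_[p]) : ℚ_[p]) := by push_cast; ring
      rw [this, ← PadicInt.norm_def]
      exact hnorm
    calc (p:ℝ) ^ (-v) * ‖((u : ℤ_[p]) : ℚ_[p]) - ((u.appr m : ℕ) : ℚ_[p])‖
        ≤ (p:ℝ) ^ (-v) * (p:ℝ) ^ (-(m:ℤ)) := by
          apply mul_le_mul_of_nonneg_left hcoe
          positivity
      _ = 1 := by
          rw [← zpow_add₀ (by have := hp_pos p; positivity : (p:ℝ) ≠ 0)]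
          have : -v + -(m:ℤ) = 0 := by omega
          rw [this, zpow_zero]

lemma padicFract_mul_pow (x : ℚ_[p]) :
    ∃ z : ℤ, padicFract p x * (p:ℚ) ^ ((-x.valuation).toNat) = z := by
  by_cases hx : x = 0
  · exact ⟨0, by simp [hx, padicFract_zero]⟩
  by_cases hv : 0 ≤ x.valuation
  · have h1 : Finset.Ico x.valuation 0 = ∅ := Finset.Ico_eq_empty (by omega)
    exact ⟨0, by simp [padicFract, h1]⟩
  · push_neg at hv
    refine ⟨((padicUnitPart p x).appr (-x.valuation).toNat : ℤ), ?_⟩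
    rw [padicFract_eq p x hx]
    rw [mul_comm ((p:ℚ) ^ x.valuation) _, mul_assoc, ← zpow_natCast (p:ℚ) (-x.valuation).toNat,
      ← zpow_add₀ (hq_ne p)]
    have : x.valuation + ((-x.valuation).toNat : ℤ) = 0 := by omega
    rw [this, zpow_zero, mul_one]
    push_cast; ring

lemma rat_int_of_norm_le (r : ℚ) (N : ℕ) (z : ℤ) (h : r * (p:ℚ)^N = z)
    (hn : ‖((r : ℚ) : ℚ_[p])‖ ≤ 1) : ∃ m : ℤ, r = m := by
  induction N generalizing r z with
  | zero => exact ⟨z, by simpa using h⟩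
  | succ N ih =>
      have hpq : (p:ℚ) ≠ 0 := hq_ne p
      have h' : (r * p) * (p:ℚ)^N = z := by rw [← h, pow_succ]; ring
      have hn' : ‖(((r * p : ℚ)) : ℚ_[p])‖ ≤ 1 := by
        push_cast
        rw [norm_mul, Padic.norm_p]
        have hp1 : (1:ℝ) ≤ p := by exact_mod_cast (Fact.out (p := p.Prime)).one_le
        calc ‖((r:ℚ) : ℚ_[p])‖ * (p:ℝ)⁻¹ ≤ 1 * 1 := by
              apply mul_le_mul hn _ (by positivity) zero_le_one
              rw [inv_le_one_iff₀]; right; exact hp1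
          _ = 1 := by ring
      obtain ⟨m, hm⟩ := ih (r * p) z h' hn'
      have hdvd : (p:ℤ) ∣ m := by
        rw [← Padic.norm_intCast_lt_one_iff]
        have : ((m:ℚ_[p])) = ((r:ℚ):ℚ_[p]) * (p:ℚ_[p]) := by
          have : ((m:ℚ):ℚ_[p]) = ((r*p:ℚ):ℚ_[p]) := by rw [hm]
          push_cast at this ⊢
          exact this
        rw [this, norm_mul, Padic.norm_p]
        have hp1 : (1:ℝ) < p := by exact_mod_cast (Fact.out (p := p.Prime)).one_lt
        calc ‖((r:ℚ):ℚ_[p])‖ * (p:ℝ)⁻¹ ≤ 1 * (p:ℝ)⁻¹ := by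
              apply mul_le_mul_of_nonneg_right hn (by positivity)
          _ < 1 := by rw [one_mul, inv_lt_one_iff₀]; right; exact hp1
      obtain ⟨m', hm'⟩ := hdvd
      refine ⟨m', ?_⟩
      have : r * p = (m' : ℚ) * p := by
        rw [hm, hm']; push_cast; ring
      exact mul_right_cancel₀ hpq this

lemma padicFract_eq_zero_of_norm_le (x : ℚ_[p]) (h : ‖x‖ ≤ 1) : padicFract p x = 0 := by
  by_cases hx : x = 0
  · simp [hx, padicFract_zero]
  · have hv : 0 ≤ x.valuation := (Padic.norm_le_one_iff_val_nonneg x).mp h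
    have h1 : Finset.Ico x.valuation 0 = ∅ := Finset.Ico_eq_empty (by omega)
    simp [padicFract, h1]

lemma padicChar_eq_one_of_norm_le (x : ℚ_[p]) (h : ‖x‖ ≤ 1) : padicChar p x = 1 := by
  rw [padicChar, padicFract_eq_zero_of_norm_le p x h]
  simp

lemma padicFract_mul_pow' (x : ℚ_[p]) (N : ℕ) (hN : (-x.valuation).toNat ≤ N) :
    ∃ z : ℤ, padicFract p x * (p:ℚ) ^ N = z := by
  obtain ⟨z, hz⟩ := padicFract_mul_pow p x
  refine ⟨z * p ^ (N - (-x.valuation).toNat), ?_⟩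
  have hsplit : (p:ℚ) ^ N = (p:ℚ) ^ (-x.valuation).toNat * (p:ℚ) ^ (N - (-x.valuation).toNat) := by
    rw [← pow_add]; congr 1; omega
  rw [hsplit, ← mul_assoc, hz]
  push_cast; ring

lemma padicFract_sub_int (x y : ℚ_[p]) :
    ∃ m : ℤ, padicFract p (x + y) - padicFract p x - padicFract p y = m := by
  set N := max (max (-(x+y).valuation).toNat (-x.valuation).toNat) (-y.valuation).toNat with hN
  obtain ⟨z1, hz1⟩ := padicFract_mul_pow' p (x+y) N (by omega)
  obtain ⟨z2, hz2⟩ := padicFract_mul_pow' p x N (by omega)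
  obtain ⟨z3, hz3⟩ := padicFract_mul_pow' p y N (by omega)
  apply rat_int_of_norm_le p _ N (z1 - z2 - z3)
  · push_cast
    rw [← hz1, ← hz2, ← hz3]; ring
  · have key : (((padicFract p (x+y) - padicFract p x - padicFract p y : ℚ)) : ℚ_[p])
        = -((x+y) - ((padicFract p (x+y) : ℚ) : ℚ_[p]))
          + (x - ((padicFract p x : ℚ) : ℚ_[p]))
          + (y - ((padicFract p y : ℚ) : ℚ_[p])) := by
      push_cast; ring
    rw [key]
    have h1 := norm_sub_padicFract_le p (x+y)
    have h2 := norm_sub_padicFract_le p x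
    have h3 := norm_sub_padicFract_le p y
    calc ‖_ + _ + _‖ ≤ max ‖-((x+y) - ((padicFract p (x+y) : ℚ) : ℚ_[p]))
            + (x - ((padicFract p x : ℚ) : ℚ_[p]))‖ ‖y - ((padicFract p y : ℚ) : ℚ_[p])‖ :=
          Padic.nonarchimedean _ _
      _ ≤ 1 := by
          apply max_le _ h3
          calc ‖_ + _‖ ≤ max ‖-((x+y) - ((padicFract p (x+y) : ℚ) : ℚ_[p]))‖
                ‖x - ((padicFract p x : ℚ) : ℚ_[p])‖ := Padic.nonarchimedean _ _
            _ ≤ 1 := max_le (by rwa [norm_neg]) h2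

lemma padicChar_add (x y : ℚ_[p]) :
    padicChar p (x + y) = padicChar p x * padicChar p y := by
  obtain ⟨m, hm⟩ := padicFract_sub_int p x y
  have hfr : ((padicFract p (x+y) : ℚ) : ℂ)
      = ((padicFract p x : ℚ) : ℂ) + ((padicFract p y : ℚ) : ℂ) + (m : ℂ) := by
    have : padicFract p (x+y) = padicFract p x + padicFract p y + m := by linarith
    exact_mod_cast congrArg (fun r : ℚ => (r : ℂ)) this
  rw [padicChar, padicChar, padicChar, hfr, mul_add, mul_add, Complex.exp_add,
    Complex.exp_add]
  have hone : Complex.exp (2 * Real.pi * Complex.I * (m : ℂ)) = 1 := by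
    rw [show (2 * (Real.pi : ℂ) * Complex.I * (m : ℂ))
        = (m : ℂ) * (2 * Real.pi * Complex.I) by ring]
    exact Complex.exp_int_mul_two_pi_mul_I m
  rw [hone, mul_one]

lemma abs_padicChar (x : ℚ_[p]) : ‖padicChar p x‖ = 1 := by
  rw [padicChar]
  rw [show (2 * (Real.pi : ℂ) * Complex.I * ((padicFract p x : ℚ) : ℂ))
      = ((2 * Real.pi * (padicFract p x : ℚ) : ℝ) : ℂ) * Complex.I by push_cast; ring]
  exact Complex.norm_exp_ofReal_mul_I _

lemma padicChar_pow_eq_one (x : ℚ_[p]) : ∃ N : ℕ, padicChar p x ^ p ^ N = 1 := by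
  obtain ⟨z, hz⟩ := padicFract_mul_pow p x
  refine ⟨(-x.valuation).toNat, ?_⟩
  rw [padicChar, ← Complex.exp_nat_mul]
  rw [show ((p ^ (-x.valuation).toNat : ℕ) : ℂ)
        * (2 * (Real.pi : ℂ) * Complex.I * ((padicFract p x : ℚ) : ℂ))
      = (((padicFract p x * (p:ℚ) ^ (-x.valuation).toNat : ℚ)) : ℂ)
        * (2 * Real.pi * Complex.I) by push_cast; ring]
  rw [hz]
  push_cast
  exact Complex.exp_int_mul_two_pi_mul_I z

lemma norm_add_le_one_iff (A d : ℚ_[p]) (hd : ‖d‖ ≤ 1) : ‖A + d‖ ≤ 1 ↔ ‖A‖ ≤ 1 := by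
  constructor
  · intro h
    have hA : A = (A + d) + (-d) := by ring
    rw [hA]
    refine le_trans (Padic.nonarchimedean _ _) (max_le h (by rwa [norm_neg]))
  · intro h
    exact le_trans (Padic.nonarchimedean _ _) (max_le h hd)

end Helpers

/-- The basic `p`-adic wavelet `ψ(x) = χ(p⁻¹ x) Ω(|x|_p)`. -/
noncomputable def padicPsi (p : ℕ) [Fact p.Prime] (x : ℚ_[p]) : ℂ :=
  if ‖x‖ ≤ 1 then padicChar p ((p : ℚ_[p])⁻¹ * x) else 0

/-- The `p`-adic wavelet `ψ_{γ,n,j}`. -/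
noncomputable def padicWavelet (p : ℕ) [Fact p.Prime] (γ : ℤ) (n : ℚ_[p]) (j : ℕ)
    (x : ℚ_[p]) : ℂ :=
  if ‖(p : ℚ_[p]) ^ γ * x - n‖ ≤ 1 then
    (((p : ℝ) ^ (-(γ : ℝ) / 2) : ℝ) : ℂ) *
      padicChar p ((p : ℚ_[p]) ^ (γ - 1) * (j : ℚ_[p]) * (x - (p : ℚ_[p]) ^ (-γ) * n))
  else 0

/-- Translation-dilation `ψ^{a,b}(x) = |a|_p^{-1/2} ψ((x-b)/a)` of the wavelet `ψ`. -/
noncomputable def padicPsiTransDil (p : ℕ) [Fact p.Prime] (a b : ℚ_[p]) (x : ℚ_[p]) : ℂ :=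
  ((‖a‖ ^ (-(1 : ℝ) / 2) : ℝ) : ℂ) * padicPsi p ((x - b) / a)

/-- any translation-dilation `ψ^{a,b}` of the wavelet `ψ` equals a complex
number `c` of modulus one, a root of unity of order dividing `p^N` for some `N`, times the
discrete wavelet `ψ_{γ,n,j}` with `γ = log_p |a|_p = -v_p(a)`, `n = {|a|_p b}` and
`j ≡ (a|a|_p)⁻¹ mod p`. -/
theorem transDil_eq_root_of_unity_mul_wavelet (p : ℕ) [Fact p.Prime] (a b : ℚ_[p])
    (ha : a ≠ 0) :
    ∃ (j : ℕ) (c : ℂ), 1 ≤ j ∧ j ≤ p - 1 ∧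
      ‖a * (p : ℚ_[p]) ^ (-a.valuation) * (j : ℚ_[p]) - 1‖ ≤ (p : ℝ)⁻¹ ∧
      ‖c‖ = 1 ∧ (∃ N : ℕ, c ^ p ^ N = 1) ∧
      ∀ x, padicPsiTransDil p a b x =
        c * padicWavelet p (-a.valuation)
          ((padicFract p ((p : ℚ_[p]) ^ (-a.valuation) * b) : ℚ) : ℚ_[p]) j x := by
  have hpP : p.Prime := Fact.out
  have hppos : (0:ℝ) < p := by exact_mod_cast hpP.pos
  have hpne : (p:ℚ_[p]) ≠ 0 := Nat.cast_ne_zero.mpr hpP.ne_zero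
  have hprne : (p:ℝ) ≠ 0 := ne_of_gt hppos
  haveI : NeZero p := ⟨hpP.ne_zero⟩
  set v := a.valuation with hv
  set u := padicUnitPart p a with hu
  set U : ℚ_[p] := ((u : ℤ_[p]) : ℚ_[p]) with hUdef
  have hU : U = a * (p:ℚ_[p])^(-v) := padicUnitPart_coe p ha
  have hUnorm : ‖U‖ = 1 := norm_padicUnitPart_coe p ha
  have hUne : U ≠ 0 := by intro h; rw [h, norm_zero] at hUnorm; norm_num at hUnorm
  have hunorm : ‖u‖ = 1 := by rw [PadicInt.norm_def]; exact hUnorm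
  have htz : PadicInt.toZMod u ≠ 0 := by
    intro h
    have hk : u ∈ RingHom.ker (PadicInt.toZMod : ℤ_[p] →+* ZMod p) := h
    rw [PadicInt.ker_toZMod, PadicInt.maximalIdeal_eq_span_p, Ideal.mem_span_singleton] at hk
    have := (PadicInt.norm_lt_one_iff_dvd u).mpr hk
    rw [hunorm] at this; norm_num at this
  set t : ZMod p := (PadicInt.toZMod u)⁻¹ with ht
  have htne : t ≠ 0 := inv_ne_zero htz
  set j : ℕ := t.val with hj
  set n : ℚ_[p] := ((padicFract p ((p : ℚ_[p]) ^ (-v) * b) : ℚ) : ℚ_[p]) with hn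
  -- key divisibility
  have hker : PadicInt.toZMod (u * (j : ℤ_[p]) - 1) = 0 := by
    rw [map_sub, map_mul, map_one, map_natCast]
    have h1 : ((j : ℕ) : ZMod p) = t := by rw [hj, ZMod.natCast_val, ZMod.cast_id]
    rw [h1, ht, mul_inv_cancel₀ htz, sub_self]
  have hdvd : (p : ℤ_[p]) ∣ (u * (j : ℤ_[p]) - 1) := by
    have hk : u * (j : ℤ_[p]) - 1 ∈ RingHom.ker (PadicInt.toZMod : ℤ_[p] →+* ZMod p) := hker
    rwa [PadicInt.ker_toZMod, PadicInt.maximalIdeal_eq_span_p, Ideal.mem_span_singleton] at hk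
  have hnormInt : ‖u * (j : ℤ_[p]) - 1‖ ≤ (p:ℝ)⁻¹ := by
    obtain ⟨w, hw⟩ := hdvd
    rw [hw, norm_mul, PadicInt.norm_p]
    calc (p:ℝ)⁻¹ * ‖w‖ ≤ (p:ℝ)⁻¹ * 1 :=
          mul_le_mul_of_nonneg_left w.norm_le_one (by positivity)
      _ = (p:ℝ)⁻¹ := mul_one _
  have hnormQ : ‖a * (p : ℚ_[p]) ^ (-v) * (j : ℚ_[p]) - 1‖ ≤ (p : ℝ)⁻¹ := by
    have hc : a * (p : ℚ_[p]) ^ (-v) * (j : ℚ_[p]) - 1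
        = ((u * (j : ℤ_[p]) - 1 : ℤ_[p]) : ℚ_[p]) := by
      push_cast
      rw [← hUdef, hU]
    rw [hc, ← PadicInt.norm_def]
    exact hnormInt
  refine ⟨j, padicChar p ((p:ℚ_[p])^(-v-1) * (j:ℚ_[p]) * ((p:ℚ_[p])^v * n - b)), ?_, ?_,
    hnormQ, abs_padicChar p _, padicChar_pow_eq_one p _, ?_⟩
  · have := (ZMod.val_eq_zero t).not.mpr htne
    omega
  · have := ZMod.val_lt t
    omega
  intro x
  rw [padicPsiTransDil, padicPsi, padicWavelet]
  simp only [neg_neg]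
  have hdiv : (x - b) / a = (p:ℚ_[p])^(-v) * (x - b) * U⁻¹ := by
    have hab : a = U * (p:ℚ_[p])^v := by
      rw [hU, mul_assoc, ← zpow_add₀ hpne]; simp
    rw [div_eq_iff ha, hab]
    symm
    have h1 : (p:ℚ_[p])^(-v) * (p:ℚ_[p])^v = 1 := by
      rw [← zpow_add₀ hpne]; simp
    have h2 : U⁻¹ * U = 1 := inv_mul_cancel₀ hUne
    calc (p:ℚ_[p])^(-v) * (x - b) * U⁻¹ * (U * (p:ℚ_[p])^v)
        = (x - b) * (U⁻¹ * U) * ((p:ℚ_[p])^(-v) * (p:ℚ_[p])^v) := by ring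
      _ = x - b := by rw [h1, h2]; ring
  have hfr : ‖(p:ℚ_[p])^(-v) * b - n‖ ≤ 1 := norm_sub_padicFract_le p _
  have e1 : ‖(x - b)/a‖ = ‖(p:ℚ_[p])^(-v) * x - (p:ℚ_[p])^(-v) * b‖ := by
    rw [hdiv, norm_mul, norm_inv, hUnorm, inv_one, mul_one, mul_sub]
  have hsupp : ‖(x - b)/a‖ ≤ 1 ↔ ‖(p:ℚ_[p])^(-v) * x - n‖ ≤ 1 := by
    have h2 : (p:ℚ_[p])^(-v)*x - n
        = ((p:ℚ_[p])^(-v)*x - (p:ℚ_[p])^(-v)*b) + ((p:ℚ_[p])^(-v)*b - n) := by ring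
    rw [e1, h2, norm_add_le_one_iff p _ _ hfr]
  by_cases hx : ‖(x - b)/a‖ ≤ 1
  · rw [if_pos hx, if_pos (hsupp.mp hx)]
    -- scalar part
    have hscal : (‖a‖ ^ (-(1 : ℝ) / 2) : ℝ) = (p : ℝ) ^ (-((-v : ℤ) : ℝ) / 2) := by
      rw [Padic.norm_eq_zpow_neg_valuation ha, ← Real.rpow_intCast (p:ℝ) (-v),
        ← Real.rpow_mul hppos.le]
      congr 1
      push_cast; ring
    rw [hscal]
    -- phase part
    have hxb : ‖x - b‖ ≤ (p:ℝ)^(-v) := by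
      rw [norm_div, div_le_one (norm_pos_iff.mpr ha)] at hx
      rwa [Padic.norm_eq_zpow_neg_valuation ha] at hx
    have hUj : ‖U⁻¹ - (j:ℚ_[p])‖ ≤ (p:ℝ)⁻¹ := by
      have hrw : U⁻¹ - (j:ℚ_[p]) = -(U⁻¹ * (a * (p:ℚ_[p])^(-v) * (j:ℚ_[p]) - 1)) := by
        rw [← hU]
        field_simp
        ring
      rw [hrw, norm_neg, norm_mul, norm_inv, hUnorm, inv_one, one_mul]
      exact hnormQ
    have hwnorm : ‖(p:ℚ_[p])^(-v-1) * (U⁻¹ - (j:ℚ_[p])) * (x - b)‖ ≤ 1 := by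
      have heq : ‖(p:ℚ_[p])^(-v-1) * (U⁻¹ - (j:ℚ_[p])) * (x - b)‖
          = (p:ℝ)^(v+1) * (‖U⁻¹ - (j:ℚ_[p])‖ * ‖x - b‖) := by
        rw [norm_mul, norm_mul, Padic.norm_p_zpow, mul_assoc]
        have he : -(-v-1) = v+1 := by ring
        rw [he]
      rw [heq]
      calc (p:ℝ)^(v+1) * (‖U⁻¹ - (j:ℚ_[p])‖ * ‖x - b‖)
          ≤ (p:ℝ)^(v+1) * ((p:ℝ)⁻¹ * (p:ℝ)^(-v)) := by
            apply mul_le_mul_of_nonneg_left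
              (mul_le_mul hUj hxb (norm_nonneg _) (by positivity)) (by positivity)
        _ = 1 := by
            rw [show ((p:ℝ))⁻¹ = (p:ℝ)^(-1:ℤ) from (zpow_neg_one _).symm,
              ← zpow_add₀ hprne, ← zpow_add₀ hprne,
              show v+1+(-1+-v) = 0 by ring, zpow_zero]
    have key : (p:ℚ_[p])⁻¹ * ((x - b)/a)
        = ((p:ℚ_[p])^(-v-1) * (j:ℚ_[p]) * (x - (p:ℚ_[p])^v * n))
          + ((p:ℚ_[p])^(-v-1) * (j:ℚ_[p]) * ((p:ℚ_[p])^v * n - b))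
          + ((p:ℚ_[p])^(-v-1) * (U⁻¹ - (j:ℚ_[p])) * (x - b)) := by
      rw [hdiv]
      have hsplit : (p:ℚ_[p])^(-v-1) = (p:ℚ_[p])^(-v) * (p:ℚ_[p])⁻¹ := by
        rw [zpow_sub₀ hpne, zpow_one, div_eq_mul_inv]
      rw [hsplit]
      ring
    rw [key, padicChar_add, padicChar_add, padicChar_eq_one_of_norm_le p _ hwnorm, mul_one,
      mul_comm (padicChar p ((p:ℚ_[p])^(-v-1) * (j:ℚ_[p]) * (x - (p:ℚ_[p])^v * n)))]
    ring
  · rw [if_neg hx, if_neg (fun h => hx (hsupp.mpr h))]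
    simp
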